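/- arXiv:2302.06777 — 6 statements merged into one kernel-verified Lean document; each statement's English description precedes it below -/
import Mathlib

section
/- Let T be a bounded linear operator on a complex Hilbert space H. Then ‖ℜT‖ ≤ ∫₀¹ ω((1−t)T + tT*) dt ≤ ω(T). -/
open ContinuousLinearMap ComplexConjugate

/-- The numerical radius of a bounded operator on a complex inner ℂ product space:
`ω(T) = sup { |⟨Tx, x⟩| : ‖x‖ = 1 }`. -/
noncomputable def numRadius {E : Type*} [NormedAddCommGroup E] [InnerProductSpace ℂ E]
    (T : E →L[ℂ] E) : ℝ :=
  ⨆ x : { x : E // ‖x‖ = 1 }, ‖(inner ℂ (T x) (x : E) : ℂ)‖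

section aux

variable {E : Type*} [NormedAddCommGroup E] [InnerProductSpace ℂ E]

lemma numRadius_nonneg (T : E →L[ℂ] E) : 0 ≤ numRadius T :=
  Real.iSup_nonneg fun _ => norm_nonneg _

lemma numRadius_le (T : E →L[ℂ] E) {c : ℝ} (hc : 0 ≤ c)
    (h : ∀ x : { x : E // ‖x‖ = 1 }, ‖(inner ℂ (T x) (x : E) : ℂ)‖ ≤ c) : numRadius T ≤ c :=
  Real.iSup_le h hc

lemma numRadius_bddAbove (T : E →L[ℂ] E) :
    BddAbove (Set.range fun x : { x : E // ‖x‖ = 1 } => ‖(inner ℂ (T x) (x : E) : ℂ)‖) := by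
  refine ⟨‖T‖, ?_⟩
  rintro _ ⟨x, rfl⟩
  calc ‖(inner ℂ (T x) (x : E) : ℂ)‖ ≤ ‖T (x : E)‖ * ‖(x : E)‖ := norm_inner_le_norm _ _
    _ ≤ ‖T‖ * ‖(x : E)‖ * ‖(x : E)‖ := by
        exact mul_le_mul_of_nonneg_right (T.le_opNorm _) (norm_nonneg _)
    _ = ‖T‖ := by rw [x.2]; ring

lemma le_numRadius (T : E →L[ℂ] E) (x : { x : E // ‖x‖ = 1 }) :
    ‖(inner ℂ (T x) (x : E) : ℂ)‖ ≤ numRadius T :=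
  le_ciSup (numRadius_bddAbove T) x

lemma numRadius_quad (T : E →L[ℂ] E) (z : E) :
    ‖(inner ℂ (T z) z : ℂ)‖ ≤ numRadius T * ‖z‖ ^ 2 := by
  rcases eq_or_ne z 0 with rfl | hz
  · simp
  · have hnz : ‖z‖ ≠ 0 := norm_ne_zero_iff.mpr hz
    set x : E := (‖z‖⁻¹ : ℂ) • z with hx
    have hxu : ‖x‖ = 1 := by
      rw [hx, norm_smul]
      simp [norm_inv, hnz]
    have h1 : (inner ℂ (T x) x : ℂ) = (‖z‖⁻¹ : ℂ) * (‖z‖⁻¹ : ℂ) * inner ℂ (T z) z := by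
      simp only [hx, map_smul, inner_smul_left, inner_smul_right, map_inv₀,
        Complex.conj_ofReal]
      ring
    have h2 := le_numRadius T ⟨x, hxu⟩
    rw [h1] at h2
    have h3 : ‖(‖z‖⁻¹ : ℂ) * (‖z‖⁻¹ : ℂ) * inner ℂ (T z) z‖
        = ‖z‖⁻¹ * ‖z‖⁻¹ * ‖(inner ℂ (T z) z : ℂ)‖ := by
      simp [norm_mul, norm_inv, Complex.norm_real, Real.norm_eq_abs,
        abs_of_nonneg (norm_nonneg z)]
    rw [h3] at h2
    have hpos : (0:ℝ) < ‖z‖ := norm_pos_iff.mpr hz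
    have := mul_le_mul_of_nonneg_right h2 (sq_nonneg ‖z‖)
    calc ‖(inner ℂ (T z) z : ℂ)‖ = ‖z‖⁻¹ * ‖z‖⁻¹ * ‖(inner ℂ (T z) z : ℂ)‖ * ‖z‖ ^ 2 := by
          field_simp
      _ ≤ numRadius T * ‖z‖ ^ 2 := this

lemma numRadius_le_add (A B : E →L[ℂ] E) : numRadius A ≤ numRadius B + ‖A - B‖ := by
  refine numRadius_le A (add_nonneg (numRadius_nonneg B) (norm_nonneg _)) fun x => ?_
  have h1 : (inner ℂ (A x) (x : E) : ℂ)
      = inner ℂ (B x) (x : E) + inner ℂ ((A - B) x) (x : E) := by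
    simp [inner_add_left, ContinuousLinearMap.sub_apply, inner_sub_left]
  rw [h1]
  calc ‖(inner ℂ (B x) (x : E) : ℂ) + inner ℂ ((A - B) x) (x : E)‖
      ≤ ‖(inner ℂ (B x) (x : E) : ℂ)‖ + ‖(inner ℂ ((A - B) x) (x : E) : ℂ)‖ := norm_add_le _ _
    _ ≤ numRadius B + ‖A - B‖ := by
        refine add_le_add (le_numRadius B x) ?_
        calc ‖(inner ℂ ((A - B) x) (x : E) : ℂ)‖ ≤ ‖(A - B) (x : E)‖ * ‖(x : E)‖ :=
              norm_inner_le_norm _ _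
          _ ≤ ‖A - B‖ * ‖(x : E)‖ * ‖(x : E)‖ :=
              mul_le_mul_of_nonneg_right ((A - B).le_opNorm _) (norm_nonneg _)
          _ = ‖A - B‖ := by rw [x.2]; ring

end aux

section selfadj

variable {E : Type*} [NormedAddCommGroup E] [InnerProductSpace ℂ E] [CompleteSpace E]

lemma norm_le_numRadius_of_selfAdjoint {A : E →L[ℂ] E} (hA : adjoint A = A) :
    ‖A‖ ≤ numRadius A := by
  set M := numRadius A with hM
  have hM0 : 0 ≤ M := numRadius_nonneg A
  refine A.opNorm_le_bound hM0 fun x => ?_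
  by_cases hx : A x = 0
  · rw [hx, norm_zero]
    exact mul_nonneg hM0 (norm_nonneg x)
  have hAx : (0:ℝ) < ‖A x‖ := norm_pos_iff.mpr hx
  have hxne : x ≠ 0 := fun h => hx (by rw [h, map_zero])
  have hxpos : (0:ℝ) < ‖x‖ := norm_pos_iff.mpr hxne
  set y : E := ((‖x‖ / ‖A x‖ : ℝ) : ℂ) • A x with hy
  have hyn : ‖y‖ = ‖x‖ := by
    rw [hy, norm_smul, Complex.norm_real, Real.norm_eq_abs,
      abs_of_nonneg (div_nonneg (norm_nonneg x) (norm_nonneg _)),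
      div_mul_cancel₀ _ (ne_of_gt hAx)]
  have hsym : ∀ u v : E, (inner ℂ (A u) v : ℂ) = inner ℂ u (A v) := fun u v => by
    conv_lhs => rw [← hA, adjoint_inner_left]
  -- re ⟪A x, y⟫ = ‖x‖ * ‖A x‖
  have hre : ((inner ℂ (A x) y : ℂ)).re = ‖x‖ * ‖A x‖ := by
    rw [hy, inner_smul_right]
    have : (inner ℂ (A x) (A x) : ℂ) = ((‖A x‖ : ℂ)) ^ 2 := inner_self_eq_norm_sq_to_K (A x)
    rw [this]
    have : (((‖x‖ / ‖A x‖ : ℝ) : ℂ) * (‖A x‖ : ℂ) ^ 2)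
        = (((‖x‖ / ‖A x‖) * ‖A x‖ ^ 2 : ℝ) : ℂ) := by push_cast; ring
    rw [this, Complex.ofReal_re]
    field_simp
  -- polarization
  have hpol : (inner ℂ (A (x + y)) (x + y) : ℂ) - inner ℂ (A (x - y)) (x - y)
      = 2 * (inner ℂ (A x) y + inner ℂ (A y) x) := by
    simp only [map_add, map_sub, inner_add_left, inner_add_right, inner_sub_left,
      inner_sub_right]
    ring
  have hconj : (inner ℂ (A y) x : ℂ) = conj (inner ℂ (A x) y : ℂ) := by
    rw [hsym y x, ← inner_conj_symm, hsym x y]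
  have hre4 : ((inner ℂ (A (x + y)) (x + y) : ℂ)).re - ((inner ℂ (A (x - y)) (x - y) : ℂ)).re
      = 4 * ((inner ℂ (A x) y : ℂ)).re := by
    have hc : (inner ℂ (A (x + y)) (x + y) : ℂ) - inner ℂ (A (x - y)) (x - y)
        = ((4 * ((inner ℂ (A x) y : ℂ)).re : ℝ) : ℂ) := by
      rw [hpol, hconj, Complex.add_conj]
      push_cast
      ring
    have := congrArg Complex.re hc
    simpa [Complex.sub_re, Complex.ofReal_re] using this
  have h1 : ((inner ℂ (A (x + y)) (x + y) : ℂ)).re ≤ M * ‖x + y‖ ^ 2 :=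
    le_trans (Complex.re_le_norm _) (numRadius_quad A (x + y))
  have h2 : -(M * ‖x - y‖ ^ 2) ≤ ((inner ℂ (A (x - y)) (x - y) : ℂ)).re := by
    have := numRadius_quad A (x - y)
    have habs := neg_abs_le ((inner ℂ (A (x - y)) (x - y) : ℂ)).re
    have hre_le : |((inner ℂ (A (x - y)) (x - y) : ℂ)).re| ≤ M * ‖x - y‖ ^ 2 :=
      le_trans (Complex.abs_re_le_norm _) this
    linarith [abs_nonneg ((inner ℂ (A (x - y)) (x - y) : ℂ)).re]
  have hpar : ‖x + y‖ ^ 2 + ‖x - y‖ ^ 2 = 2 * (‖x‖ ^ 2 + ‖y‖ ^ 2) := by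
    have := parallelogram_law_with_norm ℂ x y
    linarith [this]
  have hkey : 4 * (‖x‖ * ‖A x‖) ≤ 4 * (M * ‖x‖ ^ 2) := by
    have : 4 * ((inner ℂ (A x) y : ℂ)).re ≤ M * ‖x + y‖ ^ 2 + M * ‖x - y‖ ^ 2 := by
      rw [← hre4]; linarith
    rw [hre] at this
    have h3 : M * ‖x + y‖ ^ 2 + M * ‖x - y‖ ^ 2 = M * (‖x + y‖ ^ 2 + ‖x - y‖ ^ 2) := by ring
    rw [h3, hpar, hyn] at this
    linarith
  have : ‖x‖ * ‖A x‖ ≤ M * ‖x‖ ^ 2 := by linarith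
  nlinarith [this, hxpos]

end selfadj

/-- `‖ℜT‖ ≤ ∫₀¹ ω((1−t)T + tT*) dt ≤ ω(T)`. -/
theorem stmt_0 {H : Type*} [NormedAddCommGroup H] [InnerProductSpace ℂ H] [CompleteSpace H]
    (T : H →L[ℂ] H) :
    ‖(2 : ℂ)⁻¹ • (T + adjoint T)‖ ≤
        (∫ t in (0:ℝ)..1, numRadius (((1 - t : ℝ) : ℂ) • T + ((t : ℝ) : ℂ) • adjoint T)) ∧
      (∫ t in (0:ℝ)..1, numRadius (((1 - t : ℝ) : ℂ) • T + ((t : ℝ) : ℂ) • adjoint T)) ≤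
        numRadius T := by
  set S : ℝ → (H →L[ℂ] H) := fun t => ((1 - t : ℝ) : ℂ) • T + ((t : ℝ) : ℂ) • adjoint T with hS
  set f : ℝ → ℝ := fun t => numRadius (S t) with hf
  set A : H →L[ℂ] H := (2 : ℂ)⁻¹ • (T + adjoint T) with hAdef
  -- A is selfadjoint
  have hAsa : adjoint A = A := by
    have h2 : (starRingEnd ℂ) (2 : ℂ)⁻¹ = (2 : ℂ)⁻¹ := by rw [map_inv₀, map_ofNat]
    rw [hAdef, map_smulₛₗ, map_add, adjoint_adjoint, h2, add_comm]
  -- inner ℂ products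
  have hinner : ∀ (t : ℝ) (x : { x : H // ‖x‖ = 1 }),
      (inner ℂ (S t x) (x : H) : ℂ)
        = ((1 - t : ℝ) : ℂ) * inner ℂ (T x) (x : H) + ((t : ℝ) : ℂ) * conj (inner ℂ (T x) (x : H) : ℂ) := by
    intro t x
    have hadj : (inner ℂ (adjoint T (x : H)) (x : H) : ℂ) = conj (inner ℂ (T x) (x : H) : ℂ) := by
      rw [adjoint_inner_left, ← inner_conj_symm]
    simp only [hS, ContinuousLinearMap.add_apply, ContinuousLinearMap.coe_smul',
      Pi.smul_apply, inner_add_left, inner_smul_left, hadj]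
    rw [Complex.conj_ofReal, Complex.conj_ofReal]
  have hinnerA : ∀ x : { x : H // ‖x‖ = 1 },
      (inner ℂ (A x) (x : H) : ℂ) = (((inner ℂ (T x) (x : H) : ℂ)).re : ℂ) := by
    intro x
    have hadj : (inner ℂ (adjoint T (x : H)) (x : H) : ℂ) = conj (inner ℂ (T x) (x : H) : ℂ) := by
      rw [adjoint_inner_left, ← inner_conj_symm]
    simp only [hAdef, ContinuousLinearMap.add_apply, ContinuousLinearMap.coe_smul',
      Pi.smul_apply, inner_add_left, inner_smul_left, hadj]
    rw [Complex.add_conj]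
    rw [show ((starRingEnd ℂ) (2:ℂ)⁻¹) = (2:ℂ)⁻¹ from by rw [map_inv₀, map_ofNat]]
    push_cast
    ring
  -- ‖A‖ ≤ f t for every t
  have hlow : ∀ t : ℝ, ‖A‖ ≤ f t := by
    intro t
    refine (norm_le_numRadius_of_selfAdjoint hAsa).trans ?_
    refine numRadius_le A (numRadius_nonneg _) fun x => ?_
    rw [hinnerA x]
    set a : ℂ := inner ℂ (T x) (x : H)
    have h1 : ‖((a.re : ℝ) : ℂ)‖ = |a.re| := by simp
    have h2 : |(((1 - t : ℝ) : ℂ) * a + ((t : ℝ) : ℂ) * conj a).re|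
        = |a.re| := by
      congr 1
      simp only [Complex.add_re, Complex.mul_re, Complex.ofReal_re, Complex.ofReal_im,
        Complex.conj_re, Complex.conj_im]
      ring
    have h3 : |a.re| ≤ ‖(inner ℂ (S t x) (x : H) : ℂ)‖ := by
      rw [hinner t x, ← h2]
      exact Complex.abs_re_le_norm _
    exact h1.trans_le (h3.trans (le_numRadius (S t) x))
  -- f t ≤ numRadius T on [0,1]
  have hup : ∀ t ∈ Set.Icc (0:ℝ) 1, f t ≤ numRadius T := by
    intro t ht
    refine numRadius_le (S t) (numRadius_nonneg T) fun x => ?_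
    rw [hinner t x]
    set a : ℂ := inner ℂ (T x) (x : H)
    calc ‖((1 - t : ℝ) : ℂ) * a + ((t : ℝ) : ℂ) * conj a‖
        ≤ ‖((1 - t : ℝ) : ℂ) * a‖ + ‖((t : ℝ) : ℂ) * conj a‖ := norm_add_le _ _
      _ = (1 - t) * ‖a‖ + t * ‖a‖ := by
          rw [norm_mul, norm_mul, RCLike.norm_conj, Complex.norm_real, Complex.norm_real,
            Real.norm_eq_abs, Real.norm_eq_abs, abs_of_nonneg ht.1,
            abs_of_nonneg (by linarith [ht.2] : (0:ℝ) ≤ 1 - t)]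
      _ = ‖a‖ := by ring
      _ ≤ numRadius T := le_numRadius T x
  -- f is Lipschitz, hence continuous, hence interval integrable
  have hSdiff : ∀ s t : ℝ, S t - S s = ((t - s : ℝ) : ℂ) • (adjoint T - T) := by
    intro s t
    simp only [hS]
    ext z
    simp only [ContinuousLinearMap.sub_apply, ContinuousLinearMap.add_apply,
      ContinuousLinearMap.coe_smul', Pi.smul_apply, smul_sub]
    match_scalars <;> push_cast <;> ring
  have hlip : LipschitzWith ‖adjoint T - T‖₊ f := by
    refine LipschitzWith.of_dist_le_mul fun t s => ?_
    rw [Real.dist_eq, Real.dist_eq]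
    have hb : ∀ u v : ℝ, f u - f v ≤ ‖adjoint T - T‖ * |u - v| := by
      intro u v
      have := numRadius_le_add (S u) (S v)
      have hn : ‖S u - S v‖ = ‖adjoint T - T‖ * |u - v| := by
        rw [hSdiff v u, norm_smul, Complex.norm_real, Real.norm_eq_abs]
        ring
      rw [hn] at this
      simp only [hf]
      linarith
    have h1 := hb t s
    have h2 := hb s t
    rw [abs_sub_comm s t] at h2
    rw [abs_sub_le_iff]
    constructor <;> [exact h1; exact h2]
  have hcont : Continuous f := hlip.continuous
  have hint : IntervalIntegrable f MeasureTheory.volume 0 1 :=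
    hcont.intervalIntegrable 0 1
  constructor
  · -- lower bound
    have : (∫ _ in (0:ℝ)..1, ‖A‖) ≤ ∫ t in (0:ℝ)..1, f t := by
      refine intervalIntegral.integral_mono_on (by norm_num)
        (intervalIntegrable_const) hint fun t _ => hlow t
    rwa [intervalIntegral.integral_const, sub_zero, one_smul] at this
  · -- upper bound
    have : (∫ t in (0:ℝ)..1, f t) ≤ ∫ _ in (0:ℝ)..1, numRadius T := by
      refine intervalIntegral.integral_mono_on (by norm_num)
        hint (intervalIntegrable_const) fun t ht => hup t ht
    rwa [intervalIntegral.integral_const, sub_zero, one_smul] at this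
end

section
/- Let T be a bounded linear operator on a complex Hilbert space H. Then ‖ℜT‖ ≤ ∫₀¹ ‖(1−t)T + tT*‖ dt ≤ ‖T‖. -/
open ContinuousLinearMap

/-- `‖ℜT‖ ≤ ∫₀¹ ‖(1−t)T + tT*‖ dt ≤ ‖T‖`. -/
theorem stmt_2 {H : Type*} [NormedAddCommGroup H] [InnerProductSpace ℂ H] [CompleteSpace H]
    (T : H →L[ℂ] H) :
    ‖(2 : ℂ)⁻¹ • (T + adjoint T)‖ ≤
        (∫ t in (0:ℝ)..1, ‖((1 - t : ℝ) : ℂ) • T + ((t : ℝ) : ℂ) • adjoint T‖) ∧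
      (∫ t in (0:ℝ)..1, ‖((1 - t : ℝ) : ℂ) • T + ((t : ℝ) : ℂ) • adjoint T‖) ≤ ‖T‖ := by
  set f : ℝ → (H →L[ℂ] H) := fun t => ((1 - t : ℝ) : ℂ) • T + ((t : ℝ) : ℂ) • adjoint T with hf
  have hfc : Continuous f := by
    apply Continuous.add
    · exact (Complex.continuous_ofReal.comp (continuous_const.sub continuous_id)).smul continuous_const
    · exact (Complex.continuous_ofReal.comp continuous_id).smul continuous_const
  have h1 : ∫ t in (0:ℝ)..1, ((1 - t : ℝ) : ℂ) = (2:ℂ)⁻¹ := by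
    rw [intervalIntegral.integral_ofReal]
    norm_num [intervalIntegral.integral_sub intervalIntegrable_const intervalIntegral.intervalIntegrable_id, integral_id]
  have h2 : ∫ t in (0:ℝ)..1, ((t : ℝ) : ℂ) = (2:ℂ)⁻¹ := by
    rw [intervalIntegral.integral_ofReal]
    norm_num
  have hint : ∫ t in (0:ℝ)..1, f t = (2:ℂ)⁻¹ • (T + adjoint T) := by
    rw [hf]
    rw [intervalIntegral.integral_add
      (((by fun_prop : Continuous fun t : ℝ => ((1 - t : ℝ) : ℂ) • T)).intervalIntegrable 0 1)
      (((by fun_prop : Continuous fun t : ℝ => ((t : ℝ) : ℂ) • adjoint T)).intervalIntegrable 0 1),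
      intervalIntegral.integral_smul_const, intervalIntegral.integral_smul_const, h1, h2,
      smul_add]
  constructor
  · calc ‖(2 : ℂ)⁻¹ • (T + adjoint T)‖ = ‖∫ t in (0:ℝ)..1, f t‖ := by rw [hint]
      _ ≤ ∫ t in (0:ℝ)..1, ‖f t‖ :=
        intervalIntegral.norm_integral_le_integral_norm (by norm_num)
  · have hmono : ∀ t ∈ Set.Icc (0:ℝ) 1, ‖f t‖ ≤ ‖T‖ := by
      intro t ht
      calc ‖f t‖ ≤ ‖((1 - t : ℝ) : ℂ) • T‖ + ‖((t : ℝ) : ℂ) • adjoint T‖ := norm_add_le _ _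
        _ = |1 - t| * ‖T‖ + |t| * ‖adjoint T‖ := by
            rw [norm_smul, norm_smul, Complex.norm_real, Complex.norm_real,
              Real.norm_eq_abs, Real.norm_eq_abs]
        _ = (1 - t) * ‖T‖ + t * ‖T‖ := by
            rw [abs_of_nonneg (by linarith [ht.2]), abs_of_nonneg ht.1, ContinuousLinearMap.adjoint.norm_map T]
        _ = ‖T‖ := by ring
    refine le_trans (intervalIntegral.integral_mono_on (a := (0:ℝ)) (b := 1) (by norm_num)
      ((hfc.norm).intervalIntegrable 0 1)
      (intervalIntegrable_const (μ := MeasureTheory.volume) (c := ‖T‖)) hmono) ?_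
    simp
end

section
/- Let T be a bounded linear operator on a complex Hilbert space H. Then ‖ℑT‖ ≤ ∫₀¹ ‖(1−t)T* − tT‖ dt ≤ ‖T‖. -/
open ContinuousLinearMap

/-- `‖ℑT‖ ≤ ∫₀¹ ‖(1−t)T* − tT‖ dt ≤ ‖T‖`. -/
theorem stmt_3 {H : Type*} [NormedAddCommGroup H] [InnerProductSpace ℂ H] [CompleteSpace H]
    (T : H →L[ℂ] H) :
    ‖(2 * Complex.I)⁻¹ • (T - adjoint T)‖ ≤
        (∫ t in (0:ℝ)..1, ‖((1 - t : ℝ) : ℂ) • adjoint T - ((t : ℝ) : ℂ) • T‖) ∧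
      (∫ t in (0:ℝ)..1, ‖((1 - t : ℝ) : ℂ) • adjoint T - ((t : ℝ) : ℂ) • T‖) ≤ ‖T‖ := by
  set S := adjoint T with hS
  set f : ℝ → ℝ := fun t => ‖((1 - t : ℝ) : ℂ) • S - ((t : ℝ) : ℂ) • T‖ with hf
  have hcont : Continuous f := by
    apply Continuous.norm
    fun_prop
  have hint : IntervalIntegrable f MeasureTheory.volume 0 1 :=
    hcont.intervalIntegrable 0 1
  have hint' : IntervalIntegrable (fun t => f (1 - t)) MeasureTheory.volume 0 1 :=
    (hcont.comp (by fun_prop)).intervalIntegrable 0 1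
  have hflip : (∫ t in (0:ℝ)..1, f (1 - t)) = ∫ t in (0:ℝ)..1, f t := by
    rw [intervalIntegral.integral_comp_sub_left f 1]
    norm_num
  constructor
  · have hnorm : ‖(2 * Complex.I)⁻¹ • (T - S)‖ = ‖T - S‖ / 2 := by
      rw [norm_smul, norm_inv]
      simp [Complex.norm_I]
      ring
    rw [hnorm]
    have key : ∀ t : ℝ, ‖T - S‖ ≤ f t + f (1 - t) := by
      intro t
      have : (((1 - t : ℝ) : ℂ) • S - ((t : ℝ) : ℂ) • T)
          + (((1 - (1 - t) : ℝ) : ℂ) • S - (((1 - t : ℝ)) : ℂ) • T) = S - T := by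
        push_cast
        module
      calc ‖T - S‖ = ‖S - T‖ := norm_sub_rev _ _
        _ = ‖(((1 - t : ℝ) : ℂ) • S - ((t : ℝ) : ℂ) • T)
          + (((1 - (1 - t) : ℝ) : ℂ) • S - (((1 - t : ℝ)) : ℂ) • T)‖ := by rw [this]
        _ ≤ f t + f (1 - t) := norm_add_le _ _
    have h2 : ‖T - S‖ = ∫ t in (0:ℝ)..1, ‖T - S‖ := by simp
    have h3 : (∫ t in (0:ℝ)..1, ‖T - S‖) ≤ ∫ t in (0:ℝ)..1, (f t + f (1 - t)) := by
      apply intervalIntegral.integral_mono_on zero_le_one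
        (intervalIntegrable_const) (hint.add hint')
      intro t _
      exact key t
    rw [intervalIntegral.integral_add hint hint', hflip] at h3
    have h4 : (∫ _t in (0:ℝ)..1, ‖T - S‖) = ‖T - S‖ := by simp
    rw [h4] at h3
    linarith
  · have hub : ∀ t ∈ Set.Icc (0:ℝ) 1, f t ≤ ‖T‖ := by
      intro t ht
      have h1 : f t ≤ ‖((1 - t : ℝ) : ℂ) • S‖ + ‖((t : ℝ) : ℂ) • T‖ := norm_sub_le _ _
      rw [norm_smul, norm_smul] at h1
      have hS' : ‖S‖ = ‖T‖ := (ContinuousLinearMap.adjoint : (H →L[ℂ] H) ≃ₗᵢ⋆[ℂ] (H →L[ℂ] H)).norm_map T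
      have ha : ‖((1 - t : ℝ) : ℂ)‖ = 1 - t := by
        rw [Complex.norm_real, Real.norm_eq_abs, abs_of_nonneg (by linarith [ht.2])]
      have hb : ‖((t : ℝ) : ℂ)‖ = t := by
        rw [Complex.norm_real, Real.norm_eq_abs, abs_of_nonneg ht.1]
      rw [ha, hb, hS'] at h1
      nlinarith [h1]
    calc (∫ t in (0:ℝ)..1, f t) ≤ ∫ t in (0:ℝ)..1, ‖T‖ :=
          intervalIntegral.integral_mono_on zero_le_one hint intervalIntegrable_const hub
      _ = ‖T‖ := by simp
end

section
/- Let T be a bounded linear operator on a complex Hilbert space H, and set λ₁ = sup over θ ∈ ℝ of ∫₀¹ ‖(1−t)e^{iθ}T + t e^{−iθ}T*‖ dt and λ₂ = sup over θ ∈ ℝ of ∫₀¹ ‖(1−t)e^{−iθ}T* − t e^{iθ}T‖ dt. Then ω(T) ≤ min{λ₁, λ₂} ≤ ‖T‖. -/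
open ContinuousLinearMap

section Aux

open Complex

private lemma key1 (z : ℂ) : exp (-(z.arg * I)) * z = (‖z‖ : ℂ) := by
  set a := z.arg with ha
  set r := ‖z‖ with hr
  have h : (r : ℂ) * exp (a * I) = z := norm_mul_exp_arg_mul_I z
  rw [← h, show exp (-(↑a * I)) * ((r:ℂ) * exp (↑a * I))
      = (r:ℂ) * (exp (-(↑a * I)) * exp (↑a * I)) from by ring,
    ← exp_add, neg_add_cancel, exp_zero, mul_one]

private lemma key1' (z : ℂ) : exp (z.arg * I) * (starRingEnd ℂ) z = (‖z‖ : ℂ) := by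
  have := congrArg (starRingEnd ℂ) (key1 z)
  simpa [map_mul, ← Complex.exp_conj, Complex.conj_ofReal] using this

private lemma pihalf : exp ((Real.pi/2 : ℝ) * I) = I := by
  rw [exp_mul_I]; push_cast
  simp [Complex.cos_pi_div_two, Complex.sin_pi_div_two]

private lemma key2 (z : ℂ) :
    exp (-(↑(z.arg - Real.pi/2) * I)) * z = I * (‖z‖ : ℂ) := by
  have hc : (↑(z.arg - Real.pi/2) : ℂ) = ↑z.arg - ↑(Real.pi/2 : ℝ) := by push_cast; ring
  rw [hc, show -((↑z.arg - ↑(Real.pi/2:ℝ)) * I) = (↑(Real.pi/2:ℝ) * I) + -(↑z.arg * I) from by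
    ring, exp_add, pihalf, mul_assoc, key1 z]

private lemma key2' (z : ℂ) :
    exp (↑(z.arg - Real.pi/2) * I) * (starRingEnd ℂ) z = -I * (‖z‖ : ℂ) := by
  have := congrArg (starRingEnd ℂ) (key2 z)
  simpa [map_mul, map_sub, map_div₀, map_ofNat, ← Complex.exp_conj, Complex.conj_ofReal, Complex.conj_I] using this

variable {H : Type*} [NormedAddCommGroup H] [InnerProductSpace ℂ H] [CompleteSpace H]

private lemma inner_op_le (S : H →L[ℂ] H) (x : H) (hx : ‖x‖ = 1) :
    ‖(inner ℂ (S x) x : ℂ)‖ ≤ ‖S‖ := by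
  refine (norm_inner_le_norm _ _).trans ?_
  simpa [hx] using S.le_opNorm x

private lemma inner_comp1 (T : H →L[ℂ] H) (x : H) (t θ : ℝ) :
    (inner ℂ ((((((1 - t : ℝ) : ℂ) * exp (θ * I)) • T
        + (((t : ℝ) : ℂ) * exp (-(θ * I))) • adjoint T)) x) x : ℂ)
      = ((1-t:ℝ):ℂ) * (exp (-(θ*I)) * (inner ℂ (T x) x : ℂ))
        + ((t:ℝ):ℂ) * (exp (θ*I) * (starRingEnd ℂ) (inner ℂ (T x) x : ℂ)) := by
  simp only [add_apply, coe_smul', Pi.smul_apply, inner_add_left, inner_smul_left,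
    adjoint_inner_left, map_mul, Complex.conj_ofReal, ← Complex.exp_conj, map_neg,
    Complex.conj_I, ← inner_conj_symm x (T x)]
  ring_nf

private lemma inner_comp2 (T : H →L[ℂ] H) (x : H) (t θ : ℝ) :
    (inner ℂ ((((((1 - t : ℝ) : ℂ) * exp (-(θ * I))) • adjoint T
        - (((t : ℝ) : ℂ) * exp (θ * I)) • T)) x) x : ℂ)
      = ((1-t:ℝ):ℂ) * (exp (θ*I) * (starRingEnd ℂ) (inner ℂ (T x) x : ℂ))
        - ((t:ℝ):ℂ) * (exp (-(θ*I)) * (inner ℂ (T x) x : ℂ)) := by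
  simp only [sub_apply, coe_smul', Pi.smul_apply, inner_sub_left, inner_smul_left,
    adjoint_inner_left, map_mul, Complex.conj_ofReal, ← Complex.exp_conj, map_neg,
    Complex.conj_I, ← inner_conj_symm x (T x)]
  ring_nf

private lemma norm_bd1 (T : H →L[ℂ] H) (θ t : ℝ) (ht : t ∈ Set.Icc (0:ℝ) 1) :
    ‖(((1 - t : ℝ) : ℂ) * exp (θ * I)) • T + (((t : ℝ) : ℂ) * exp (-(θ * I))) • adjoint T‖
      ≤ ‖T‖ := by
  obtain ⟨h0, h1⟩ := ht
  have hadj : ‖adjoint T‖ = ‖T‖ := LinearIsometryEquiv.norm_map adjoint T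
  refine (norm_add_le _ _).trans ?_
  rw [norm_smul, norm_smul, hadj, norm_mul, norm_mul]
  have e1 : ‖exp ((θ:ℂ) * I)‖ = 1 := by
    simp [Complex.norm_exp]
  have e2 : ‖exp (-((θ:ℂ) * I))‖ = 1 := by
    simp [Complex.norm_exp]
  rw [e1, e2]
  simp only [Complex.norm_real, Real.norm_eq_abs, mul_one]
  rw [_root_.abs_of_nonneg (show (0:ℝ) ≤ 1 - t by linarith), _root_.abs_of_nonneg h0]
  nlinarith [norm_nonneg T]

private lemma norm_bd2 (T : H →L[ℂ] H) (θ t : ℝ) (ht : t ∈ Set.Icc (0:ℝ) 1) :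
    ‖(((1 - t : ℝ) : ℂ) * exp (-(θ * I))) • adjoint T - (((t : ℝ) : ℂ) * exp (θ * I)) • T‖
      ≤ ‖T‖ := by
  obtain ⟨h0, h1⟩ := ht
  have hadj : ‖adjoint T‖ = ‖T‖ := LinearIsometryEquiv.norm_map adjoint T
  refine (norm_sub_le _ _).trans ?_
  rw [norm_smul, norm_smul, hadj, norm_mul, norm_mul]
  have e1 : ‖exp ((θ:ℂ) * I)‖ = 1 := by
    simp [Complex.norm_exp]
  have e2 : ‖exp (-((θ:ℂ) * I))‖ = 1 := by
    simp [Complex.norm_exp]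
  rw [e1, e2]
  simp only [Complex.norm_real, Real.norm_eq_abs, mul_one]
  rw [_root_.abs_of_nonneg (show (0:ℝ) ≤ 1 - t by linarith), _root_.abs_of_nonneg h0]
  nlinarith [norm_nonneg T]

private lemma cont1 (T : H →L[ℂ] H) (θ : ℝ) :
    Continuous fun t : ℝ =>
      ‖(((1 - t : ℝ) : ℂ) * exp (θ * I)) • T + (((t : ℝ) : ℂ) * exp (-(θ * I))) • adjoint T‖ := by
  fun_prop

private lemma cont2 (T : H →L[ℂ] H) (θ : ℝ) :
    Continuous fun t : ℝ =>
      ‖(((1 - t : ℝ) : ℂ) * exp (-(θ * I))) • adjoint T - (((t : ℝ) : ℂ) * exp (θ * I)) • T‖ := by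
  fun_prop

end Aux

/-- With `λ₁ = sup_θ ∫₀¹ ‖(1−t)e^{iθ}T + t e^{−iθ}T*‖ dt` and
`λ₂ = sup_θ ∫₀¹ ‖(1−t)e^{−iθ}T* − t e^{iθ}T‖ dt`, one has `ω(T) ≤ min{λ₁, λ₂} ≤ ‖T‖`. -/
theorem stmt_5 {H : Type*} [NormedAddCommGroup H] [InnerProductSpace ℂ H] [CompleteSpace H]
    (T : H →L[ℂ] H) (l1 l2 : ℝ)
    (hl1 : l1 = ⨆ θ : ℝ, ∫ t in (0:ℝ)..1,
      ‖(((1 - t : ℝ) : ℂ) * Complex.exp (θ * Complex.I)) • T +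
        (((t : ℝ) : ℂ) * Complex.exp (-(θ * Complex.I))) • adjoint T‖)
    (hl2 : l2 = ⨆ θ : ℝ, ∫ t in (0:ℝ)..1,
      ‖(((1 - t : ℝ) : ℂ) * Complex.exp (-(θ * Complex.I))) • adjoint T -
        (((t : ℝ) : ℂ) * Complex.exp (θ * Complex.I)) • T‖) :
    numRadius T ≤ min l1 l2 ∧ min l1 l2 ≤ ‖T‖ := by
  have hint1 : ∀ θ : ℝ, (∫ t in (0:ℝ)..1,
      ‖(((1 - t : ℝ) : ℂ) * Complex.exp (θ * Complex.I)) • T +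
        (((t : ℝ) : ℂ) * Complex.exp (-(θ * Complex.I))) • adjoint T‖) ≤ ‖T‖ := by
    intro θ
    have h := intervalIntegral.integral_mono_on (by norm_num : (0:ℝ) ≤ 1)
      ((cont1 T θ).intervalIntegrable 0 1) (intervalIntegrable_const : IntervalIntegrable (fun _ => ‖T‖) MeasureTheory.volume 0 1)
      (fun t ht => norm_bd1 T θ t ht)
    simpa using h
  have hint2 : ∀ θ : ℝ, (∫ t in (0:ℝ)..1,
      ‖(((1 - t : ℝ) : ℂ) * Complex.exp (-(θ * Complex.I))) • adjoint T -
        (((t : ℝ) : ℂ) * Complex.exp (θ * Complex.I)) • T‖) ≤ ‖T‖ := by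
    intro θ
    have h := intervalIntegral.integral_mono_on (by norm_num : (0:ℝ) ≤ 1)
      ((cont2 T θ).intervalIntegrable 0 1) (intervalIntegrable_const : IntervalIntegrable (fun _ => ‖T‖) MeasureTheory.volume 0 1)
      (fun t ht => norm_bd2 T θ t ht)
    simpa using h
  have hbdd1 : BddAbove (Set.range fun θ : ℝ => ∫ t in (0:ℝ)..1,
      ‖(((1 - t : ℝ) : ℂ) * Complex.exp (θ * Complex.I)) • T +
        (((t : ℝ) : ℂ) * Complex.exp (-(θ * Complex.I))) • adjoint T‖) :=
    ⟨‖T‖, by rintro _ ⟨θ, rfl⟩; exact hint1 θ⟩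
  have hbdd2 : BddAbove (Set.range fun θ : ℝ => ∫ t in (0:ℝ)..1,
      ‖(((1 - t : ℝ) : ℂ) * Complex.exp (-(θ * Complex.I))) • adjoint T -
        (((t : ℝ) : ℂ) * Complex.exp (θ * Complex.I)) • T‖) :=
    ⟨‖T‖, by rintro _ ⟨θ, rfl⟩; exact hint2 θ⟩
  have hl1T : l1 ≤ ‖T‖ := by rw [hl1]; exact Real.iSup_le hint1 (norm_nonneg T)
  have h0l1 : 0 ≤ l1 := by
    rw [hl1]
    refine le_trans ?_ (le_ciSup hbdd1 0)
    exact intervalIntegral.integral_nonneg (by norm_num) (fun t _ => norm_nonneg _)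
  have h0l2 : 0 ≤ l2 := by
    rw [hl2]
    refine le_trans ?_ (le_ciSup hbdd2 0)
    exact intervalIntegral.integral_nonneg (by norm_num) (fun t _ => norm_nonneg _)
  refine ⟨?_, (min_le_left _ _).trans hl1T⟩
  refine Real.iSup_le ?_ (le_min h0l1 h0l2)
  rintro ⟨x, hx⟩
  set z : ℂ := inner ℂ (T x) x with hz
  refine le_min ?_ ?_
  · -- ‖z‖ ≤ l1, take θ = z.arg
    set θ := z.arg with hθ
    have hval : ∀ t : ℝ,
        (inner ℂ (((((1 - t : ℝ) : ℂ) * Complex.exp (θ * Complex.I)) • T +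
          (((t : ℝ) : ℂ) * Complex.exp (-(θ * Complex.I))) • adjoint T) x) x : ℂ)
        = ((‖z‖ : ℝ) : ℂ) := by
      intro t
      rw [inner_comp1 T x t θ, ← hz, hθ, key1 z, key1' z]
      push_cast
      ring
    have hpt : ∀ t ∈ Set.Icc (0:ℝ) 1, ‖z‖ ≤
        ‖(((1 - t : ℝ) : ℂ) * Complex.exp (θ * Complex.I)) • T +
          (((t : ℝ) : ℂ) * Complex.exp (-(θ * Complex.I))) • adjoint T‖ := by
      intro t _
      have h := inner_op_le ((((1 - t : ℝ) : ℂ) * Complex.exp (θ * Complex.I)) • T +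
        (((t : ℝ) : ℂ) * Complex.exp (-(θ * Complex.I))) • adjoint T) x hx
      rw [hval t] at h
      simpa [_root_.abs_of_nonneg (norm_nonneg z)] using h
    have hmono := intervalIntegral.integral_mono_on (by norm_num : (0:ℝ) ≤ 1)
      (intervalIntegrable_const : IntervalIntegrable (fun _ => ‖z‖) MeasureTheory.volume 0 1) ((cont1 T θ).intervalIntegrable 0 1) hpt
    rw [hl1]
    refine le_trans ?_ (le_ciSup hbdd1 θ)
    simpa using hmono
  · -- ‖z‖ ≤ l2, take θ = z.arg - π/2
    set θ := z.arg - Real.pi/2 with hθ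
    have hval : ∀ t : ℝ,
        (inner ℂ (((((1 - t : ℝ) : ℂ) * Complex.exp (-(θ * Complex.I))) • adjoint T -
          (((t : ℝ) : ℂ) * Complex.exp (θ * Complex.I)) • T) x) x : ℂ)
        = -Complex.I * ((‖z‖ : ℝ) : ℂ) := by
      intro t
      rw [inner_comp2 T x t θ, ← hz, hθ, key2 z, key2' z]
      push_cast
      ring
    have hpt : ∀ t ∈ Set.Icc (0:ℝ) 1, ‖z‖ ≤
        ‖(((1 - t : ℝ) : ℂ) * Complex.exp (-(θ * Complex.I))) • adjoint T -
          (((t : ℝ) : ℂ) * Complex.exp (θ * Complex.I)) • T‖ := by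
      intro t _
      have h := inner_op_le ((((1 - t : ℝ) : ℂ) * Complex.exp (-(θ * Complex.I))) • adjoint T -
        (((t : ℝ) : ℂ) * Complex.exp (θ * Complex.I)) • T) x hx
      rw [hval t] at h
      simpa [_root_.abs_of_nonneg (norm_nonneg z)] using h
    have hmono := intervalIntegral.integral_mono_on (by norm_num : (0:ℝ) ≤ 1)
      (intervalIntegrable_const : IntervalIntegrable (fun _ => ‖z‖) MeasureTheory.volume 0 1) ((cont2 T θ).intervalIntegrable 0 1) hpt
    rw [hl2]
    refine le_trans ?_ (le_ciSup hbdd2 θ)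
    simpa using hmono
end

section
/- Let T be a bounded linear operator on a complex Hilbert space H. Then (1/2)‖T‖ + (1/2)·| ‖ℑT‖ − ‖ℜT‖ | ≤ (1/2)‖T‖ + (1/2)·(2ω(T) − (‖ℑT‖ + ‖ℜT‖)) ≤ ω(T). -/
open ContinuousLinearMap

-- key lemma: symmetric operator norm bounded by numerical bound
lemma sym_norm_le {H : Type*} [NormedAddCommGroup H] [InnerProductSpace ℂ H]
    (S : H →L[ℂ] H) (hS : ∀ x y : H, (inner ℂ (S x) y : ℂ) = inner ℂ x (S y))
    (c : ℝ) (hc : 0 ≤ c)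
    (h : ∀ x : H, ‖x‖ = 1 → ‖(inner ℂ (S x) x : ℂ)‖ ≤ c) :
    ‖S‖ ≤ c := by
  -- general bound
  have h' : ∀ x : H, ‖(inner ℂ (S x) x : ℂ)‖ ≤ c * ‖x‖ ^ 2 := by
    intro x
    rcases eq_or_ne x 0 with rfl | hx
    · simp
    · have hnx : (0:ℝ) < ‖x‖ := norm_pos_iff.mpr hx
      set u : H := ((‖x‖ : ℂ))⁻¹ • x with hu
      have hun : ‖u‖ = 1 := by
        rw [hu, norm_smul]
        simp [norm_inv, abs_of_pos hnx, inv_mul_cancel₀ hnx.ne']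
      have := h u hun
      rw [hu, map_smul, inner_smul_left, inner_smul_right] at this
      rw [norm_mul, norm_mul] at this
      simp only [norm_inv, RCLike.norm_conj, Complex.norm_real, Real.norm_eq_abs,
        abs_of_pos hnx] at this
      have : ‖x‖⁻¹ * (‖x‖⁻¹ * ‖(inner ℂ (S x) x : ℂ)‖) ≤ c := this
      calc ‖(inner ℂ (S x) x : ℂ)‖ = ‖x‖^2 * (‖x‖⁻¹ * (‖x‖⁻¹ * ‖(inner ℂ (S x) x : ℂ)‖)) := by
            field_simp
        _ ≤ ‖x‖^2 * c := by
            exact mul_le_mul_of_nonneg_left this (by positivity)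
        _ = c * ‖x‖^2 := by ring
  -- polarization bound on real parts
  have hre : ∀ x y : H, (inner ℂ (S x) y : ℂ).re ≤ c / 2 * (‖x‖ ^ 2 + ‖y‖ ^ 2) := by
    intro x y
    have hpol : (inner ℂ (S (x + y)) (x + y) : ℂ) - inner ℂ (S (x - y)) (x - y)
        = 2 * inner ℂ (S x) y + 2 * inner ℂ (S y) x := by
      simp only [map_add, map_sub, inner_add_left, inner_add_right, inner_sub_left,
        inner_sub_right]
      ring
    have hconj : (inner ℂ (S y) x : ℂ) = starRingEnd ℂ (inner ℂ (S x) y) := by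
      rw [hS y x, ← inner_conj_symm]
    have hre4 : (4 : ℝ) * (inner ℂ (S x) y : ℂ).re
        = (inner ℂ (S (x + y)) (x + y) : ℂ).re - (inner ℂ (S (x - y)) (x - y) : ℂ).re := by
      have := congrArg Complex.re hpol
      simp only [map_add, map_sub, Complex.sub_re, Complex.add_re, Complex.mul_re, hconj] at this ⊢
      simp only [Complex.conj_re, Complex.conj_im] at this
      norm_num at this
      simp only [inner_add_left, inner_add_right, inner_sub_left, inner_sub_right, Complex.add_re, Complex.sub_re]
      linarith
    have h1 : (inner ℂ (S (x + y)) (x + y) : ℂ).re ≤ c * ‖x + y‖ ^ 2 :=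
      le_trans (Complex.re_le_norm _) (h' _)
    have h2 : -(c * ‖x - y‖ ^ 2) ≤ (inner ℂ (S (x - y)) (x - y) : ℂ).re := by
      have := (abs_le.mp (le_trans (Complex.abs_re_le_norm _) (h' (x - y)))).1
      linarith [this]
    have hpar : ‖x + y‖ ^ 2 + ‖x - y‖ ^ 2 = 2 * (‖x‖ ^ 2 + ‖y‖ ^ 2) := by
      have := parallelogram_law_with_norm ℂ x y
      nlinarith [this]
    nlinarith [h1, h2, hre4]
  -- pointwise bound
  refine S.opNorm_le_bound hc (fun x => ?_)
  rcases eq_or_ne (S x) 0 with hSx | hSx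
  · simp [hSx]; positivity
  · have hnSx : (0:ℝ) < ‖S x‖ := norm_pos_iff.mpr hSx
    set y : H := ((‖x‖ / ‖S x‖ : ℝ) : ℂ) • S x with hy
    have hinner : (inner ℂ (S x) y : ℂ).re = ‖x‖ * ‖S x‖ := by
      rw [hy, inner_smul_right, Complex.mul_re, Complex.ofReal_re, Complex.ofReal_im]
      have h1 : (inner ℂ (S x) (S x) : ℂ).re = ‖S x‖ ^ 2 := by
        rw [← RCLike.re_to_complex]; exact inner_self_eq_norm_sq _
      have h2 : (inner ℂ (S x) (S x) : ℂ).im = 0 := by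
        rw [← RCLike.im_to_complex]; exact inner_self_im _
      rw [h1, h2]
      field_simp
      ring
    have hbound := hre x y
    have hyn : ‖y‖ = ‖x‖ := by
      rw [hy, norm_smul]
      simp [abs_of_nonneg (by positivity : (0:ℝ) ≤ ‖x‖ / ‖S x‖), div_mul_eq_mul_div,
        abs_of_pos hnSx]
      field_simp
    rw [hinner, hyn] at hbound
    have hx0 : (0:ℝ) < ‖x‖ := by
      by_contra hcon
      push_neg at hcon
      have : x = 0 := norm_le_zero_iff.mp hcon
      exact hSx (by simp [this])
    have : ‖x‖ * ‖S x‖ ≤ c * ‖x‖ ^ 2 := by nlinarith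
    nlinarith


/-- `(1/2)‖T‖ + (1/2)|‖ℑT‖ − ‖ℜT‖| ≤ (1/2)‖T‖ + (1/2)(2ω(T) − (‖ℑT‖ + ‖ℜT‖)) ≤ ω(T)`. -/
theorem stmt_9 {H : Type*} [NormedAddCommGroup H] [InnerProductSpace ℂ H] [CompleteSpace H]
    (T : H →L[ℂ] H) :
    (1 / 2 : ℝ) * ‖T‖ +
        (1 / 2 : ℝ) * |‖(2 * Complex.I)⁻¹ • (T - adjoint T)‖ - ‖(2 : ℂ)⁻¹ • (T + adjoint T)‖| ≤
        (1 / 2 : ℝ) * ‖T‖ +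
          (1 / 2 : ℝ) *
            (2 * numRadius T -
              (‖(2 * Complex.I)⁻¹ • (T - adjoint T)‖ + ‖(2 : ℂ)⁻¹ • (T + adjoint T)‖)) ∧
      (1 / 2 : ℝ) * ‖T‖ +
          (1 / 2 : ℝ) *
            (2 * numRadius T -
              (‖(2 * Complex.I)⁻¹ • (T - adjoint T)‖ + ‖(2 : ℂ)⁻¹ • (T + adjoint T)‖)) ≤
        numRadius T := by
  set A : H →L[ℂ] H := (2 : ℂ)⁻¹ • (T + adjoint T) with hA
  set B : H →L[ℂ] H := (2 * Complex.I)⁻¹ • (T - adjoint T) with hB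
  rcases subsingleton_or_nontrivial H with hsub | hnt
  · have hT0 : T = 0 := Subsingleton.elim T 0
    have hA0 : A = 0 := Subsingleton.elim A 0
    have hB0 : B = 0 := Subsingleton.elim B 0
    have hie : IsEmpty { x : H // ‖x‖ = 1 } := by
      constructor
      rintro ⟨x, hx⟩
      have : x = (0 : H) := Subsingleton.elim x 0
      rw [this, norm_zero] at hx
      norm_num at hx
    have hω : numRadius T = 0 := by
      rw [numRadius]
      exact Real.iSup_of_isEmpty _
    rw [hT0] at hω
    rw [hT0, hA0, hB0, hω]
    norm_num
  · -- nontrivial case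
    obtain ⟨x0, hx0⟩ := exists_ne (0 : H)
    have hx0n : (0:ℝ) < ‖x0‖ := norm_pos_iff.mpr hx0
    have hune : ‖((‖x0‖ : ℂ))⁻¹ • x0‖ = 1 := by
      rw [norm_smul]
      simp [abs_of_pos hx0n, inv_mul_cancel₀ hx0n.ne']
    have hbdd : BddAbove (Set.range fun x : { x : H // ‖x‖ = 1 } =>
        ‖(inner ℂ (T x) (x : H) : ℂ)‖) := by
      refine ⟨‖T‖, ?_⟩
      rintro _ ⟨⟨x, hx⟩, rfl⟩
      calc ‖(inner ℂ (T x) x : ℂ)‖ ≤ ‖T x‖ * ‖x‖ := norm_inner_le_norm _ _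
        _ ≤ ‖T‖ * ‖x‖ * ‖x‖ := by
            exact mul_le_mul_of_nonneg_right (T.le_opNorm x) (norm_nonneg x)
        _ = ‖T‖ := by rw [hx]; ring
    have hωge : ∀ x : H, ‖x‖ = 1 → ‖(inner ℂ (T x) (x : H) : ℂ)‖ ≤ numRadius T := by
      intro x hx
      exact le_ciSup hbdd (⟨x, hx⟩ : { x : H // ‖x‖ = 1 })
    have hω0 : 0 ≤ numRadius T :=
      le_trans (norm_nonneg _) (hωge _ hune)
    have h2I : (2 * Complex.I)⁻¹ = -(Complex.I) / 2 := by
      rw [mul_inv, Complex.inv_I]; ring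
    -- adjoint facts
    have hAsa : adjoint A = A := by
      rw [hA, ← star_eq_adjoint]
      simp only [← star_eq_adjoint, star_smul, star_add, star_star, star_inv₀, star_ofNat]
      rw [add_comm]
    have hstarc : star (-(Complex.I) / 2 : ℂ) = Complex.I / 2 := by
      simp [Complex.star_def, Complex.ext_iff]
    have hBsa : adjoint B = B := by
      rw [hB, ← star_eq_adjoint, h2I]
      simp only [← star_eq_adjoint, star_smul, star_sub, star_star, hstarc]
      module
    have hadjA : ∀ x y : H, (inner ℂ (A x) y : ℂ) = inner ℂ x (A y) := by
      intro x y; nth_rewrite 1 [← hAsa]; exact adjoint_inner_left A y x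
    have hadjB : ∀ x y : H, (inner ℂ (B x) y : ℂ) = inner ℂ x (B y) := by
      intro x y; nth_rewrite 1 [← hBsa]; exact adjoint_inner_left B y x
    -- numerical bounds for A and B
    have hinnA : ∀ x : H, ‖x‖ = 1 → ‖(inner ℂ (A x) x : ℂ)‖ ≤ numRadius T := by
      intro x hx
      have heq : (inner ℂ (A x) x : ℂ)
          = (2:ℂ)⁻¹ * ((inner ℂ (T x) x : ℂ) + star (inner ℂ (T x) x : ℂ)) := by
        rw [hA]
        simp only [ContinuousLinearMap.smul_apply, ContinuousLinearMap.add_apply,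
          inner_smul_left, inner_add_left]
        rw [adjoint_inner_left, ← inner_conj_symm (T x) x]
        simp [Complex.star_def, map_inv₀, Complex.conj_ofNat]
      rw [heq]
      calc ‖(2:ℂ)⁻¹ * ((inner ℂ (T x) x : ℂ) + star (inner ℂ (T x) x : ℂ))‖
          ≤ ‖(2:ℂ)⁻¹‖ * (‖(inner ℂ (T x) x : ℂ)‖ + ‖star (inner ℂ (T x) x : ℂ)‖) := by
            rw [norm_mul]
            exact mul_le_mul_of_nonneg_left (norm_add_le _ _) (norm_nonneg _)
        _ = ‖(inner ℂ (T x) x : ℂ)‖ := by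
            rw [norm_star]
            simp
            ring
        _ ≤ numRadius T := hωge x hx
    have hinnB : ∀ x : H, ‖x‖ = 1 → ‖(inner ℂ (B x) x : ℂ)‖ ≤ numRadius T := by
      intro x hx
      have hcinv : (starRingEnd ℂ) ((2 * Complex.I)⁻¹) = -((2 * Complex.I)⁻¹) := by
        rw [h2I, ← Complex.star_def, hstarc]
        ring
      have heq : (inner ℂ (B x) x : ℂ)
          = (2 * Complex.I)⁻¹ * (star (inner ℂ (T x) x : ℂ) - (inner ℂ (T x) x : ℂ)) := by
        rw [hB]
        simp only [ContinuousLinearMap.smul_apply, ContinuousLinearMap.sub_apply,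
          inner_smul_left, inner_sub_left]
        rw [adjoint_inner_left, ← inner_conj_symm (T x) x, hcinv, Complex.star_def]
        simp only [Complex.conj_conj]
        ring
      rw [heq]
      calc ‖(2 * Complex.I)⁻¹ * (star (inner ℂ (T x) x : ℂ) - (inner ℂ (T x) x : ℂ))‖
          ≤ ‖(2 * Complex.I)⁻¹‖ * (‖star (inner ℂ (T x) x : ℂ)‖ + ‖(inner ℂ (T x) x : ℂ)‖) := by
            rw [norm_mul]
            exact mul_le_mul_of_nonneg_left (norm_sub_le _ _) (norm_nonneg _)
        _ = ‖(inner ℂ (T x) x : ℂ)‖ := by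
            rw [norm_star, h2I]
            rw [norm_div, norm_neg, Complex.norm_I]
            norm_num
            ring
        _ ≤ numRadius T := hωge x hx
    have hAle : ‖A‖ ≤ numRadius T := sym_norm_le A hadjA _ hω0 hinnA
    have hBle : ‖B‖ ≤ numRadius T := sym_norm_le B hadjB _ hω0 hinnB
    -- ‖T‖ ≤ ‖A‖ + ‖B‖
    have hdecomp : A + Complex.I • B = T := by
      rw [hA, hB, h2I]
      match_scalars
      · norm_num [Complex.ext_iff]
      · norm_num [Complex.ext_iff]
    have hTle : ‖T‖ ≤ ‖A‖ + ‖B‖ := by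
      have hIB : ‖Complex.I • B‖ = ‖B‖ := by
        rw [norm_smul, Complex.norm_I, one_mul]
      calc ‖T‖ = ‖A + Complex.I • B‖ := by rw [hdecomp]
        _ ≤ ‖A‖ + ‖Complex.I • B‖ := norm_add_le _ _
        _ = ‖A‖ + ‖B‖ := by rw [hIB]
    constructor
    · rcases abs_cases (‖B‖ - ‖A‖) with ⟨habs, _⟩ | ⟨habs, _⟩ <;>
        rw [habs] <;> linarith
    · linarith
end

section
/- Let T be a bounded linear operator on a complex Hilbert space H. Then ω(T) = ‖T‖/2 if and only if for every θ ∈ ℝ one has ‖ℑ(e^{iθ}T)‖ = ‖ℜ(e^{iθ}T)‖ = ‖T‖/2. -/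
open ContinuousLinearMap

section Aux

open Complex

variable {H : Type*} [NormedAddCommGroup H] [InnerProductSpace ℂ H] [CompleteSpace H]

lemma aux_bdd (T : H →L[ℂ] H) :
    BddAbove (Set.range fun x : { x : H // ‖x‖ = 1 } => ‖(inner ℂ (T x) (x : H) : ℂ)‖) := by
  refine ⟨‖T‖, ?_⟩
  rintro r ⟨x, rfl⟩
  calc ‖(inner ℂ (T x) (x : H) : ℂ)‖ ≤ ‖T (x : H)‖ * ‖(x : H)‖ := norm_inner_le_norm _ _
    _ ≤ ‖T‖ * ‖(x : H)‖ * ‖(x : H)‖ := by gcongr; exact T.le_opNorm _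
    _ = ‖T‖ := by rw [x.2]; ring

lemma aux_inner_le (T : H →L[ℂ] H) {x : H} (hx : ‖x‖ = 1) :
    ‖(inner ℂ (T x) x : ℂ)‖ ≤ numRadius T :=
  le_ciSup (aux_bdd T) (⟨x, hx⟩ : { x : H // ‖x‖ = 1 })

lemma aux_numRadius_le (T : H →L[ℂ] H) {c : ℝ} (hc : 0 ≤ c)
    (h : ∀ x : H, ‖x‖ = 1 → ‖(inner ℂ (T x) x : ℂ)‖ ≤ c) : numRadius T ≤ c :=
  Real.iSup_le (fun x => h x x.2) hc

lemma aux_numRadius_nonneg (T : H →L[ℂ] H) : 0 ≤ numRadius T :=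
  Real.iSup_nonneg fun x => norm_nonneg _

/-- quadratic form bound extended from the unit sphere -/
lemma aux_quad_scale (A : H →L[ℂ] H) {c : ℝ} (hc : 0 ≤ c)
    (h : ∀ x : H, ‖x‖ = 1 → ‖(inner ℂ (A x) x : ℂ)‖ ≤ c) :
    ∀ x : H, ‖(inner ℂ (A x) x : ℂ)‖ ≤ c * ‖x‖ ^ 2 := by
  intro x
  rcases eq_or_ne x 0 with rfl | hx
  · simp
  · have hn : ‖x‖ ≠ 0 := norm_ne_zero_iff.mpr hx
    set u : H := ((‖x‖ : ℂ))⁻¹ • x with hu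
    have hun : ‖u‖ = 1 := by
      rw [hu, norm_smul]
      simp [norm_inv, hn]
    have hinner : (inner ℂ (A u) u : ℂ) = ((‖x‖ : ℂ))⁻¹ * (starRingEnd ℂ ((‖x‖ : ℂ))⁻¹) *
        (inner ℂ (A x) x : ℂ) := by
      rw [hu]
      simp only [map_smul, inner_smul_left, inner_smul_right]
      ring
    have := h u hun
    rw [hinner] at this
    rw [norm_mul, norm_mul] at this
    simp only [norm_inv, RingHomIsometric.norm_map, Complex.norm_real, norm_norm] at this
    have h2 : (‖x‖)⁻¹ * (‖x‖)⁻¹ * ‖(inner ℂ (A x) x : ℂ)‖ ≤ c := this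
    have hp : 0 < ‖x‖ := norm_pos_iff.mpr hx
    calc ‖(inner ℂ (A x) x : ℂ)‖
        = ((‖x‖)⁻¹ * ‖x‖) * ((‖x‖)⁻¹ * ‖x‖) * ‖(inner ℂ (A x) x : ℂ)‖ := by
          rw [inv_mul_cancel₀ hn]; ring
      _ = ((‖x‖)⁻¹ * (‖x‖)⁻¹ * ‖(inner ℂ (A x) x : ℂ)‖) * (‖x‖ * ‖x‖) := by ring
      _ ≤ c * (‖x‖ * ‖x‖) := mul_le_mul_of_nonneg_right h2 (by positivity)
      _ = c * ‖x‖ ^ 2 := by ring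
  
/-- For a selfadjoint operator, the norm is bounded by a bound on the quadratic form -/
lemma aux_selfadj_norm_le {A : H →L[ℂ] H} (hA : adjoint A = A) {c : ℝ} (hc : 0 ≤ c)
    (h : ∀ x : H, ‖x‖ = 1 → ‖(inner ℂ (A x) x : ℂ)‖ ≤ c) : ‖A‖ ≤ c := by
  have hq := aux_quad_scale A hc h
  refine A.opNorm_le_bound hc fun x => ?_
  by_cases hx : A x = 0
  · simp [hx]; positivity
  have hxne : x ≠ 0 := by rintro rfl; simp at hx
  have hxp : (0:ℝ) < ‖x‖ := norm_pos_iff.mpr hxne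
  have hAxp : (0:ℝ) < ‖A x‖ := norm_pos_iff.mpr hx
  set y : H := ((‖x‖ / ‖A x‖ : ℝ) : ℂ) • A x with hy
  have hyn : ‖y‖ = ‖x‖ := by
    rw [hy, norm_smul]
    simp only [Complex.norm_real, Real.norm_eq_abs]
    rw [abs_of_pos (by positivity)]
    field_simp
  have hz : (inner ℂ (A x) y : ℂ) = ((‖x‖ * ‖A x‖ : ℝ) : ℂ) := by
    rw [hy, inner_smul_right, inner_self_eq_norm_sq_to_K]
    push_cast
    have : (‖A x‖ : ℂ) ≠ 0 := by exact_mod_cast hAxp.ne'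
    field_simp
    rfl
  have hAyx : (inner ℂ (A y) x : ℂ) = (starRingEnd ℂ) (inner ℂ (A x) y : ℂ) := by
    rw [inner_conj_symm, ← adjoint_inner_left, hA]
  have expand : (inner ℂ (A (x+y)) (x+y) : ℂ) - (inner ℂ (A (x-y)) (x-y) : ℂ)
      = 2 * ((inner ℂ (A x) y : ℂ) + (inner ℂ (A y) x : ℂ)) := by
    simp only [map_add, map_sub, inner_add_left, inner_add_right, inner_sub_left, inner_sub_right]
    ring
  have key : (inner ℂ (A (x+y)) (x+y) : ℂ) - (inner ℂ (A (x-y)) (x-y) : ℂ)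
      = ((4 * (‖x‖ * ‖A x‖) : ℝ) : ℂ) := by
    rw [expand, hAyx, hz]
    rw [Complex.conj_ofReal]
    push_cast
    ring
  have keyre : (inner ℂ (A (x+y)) (x+y) : ℂ).re - (inner ℂ (A (x-y)) (x-y) : ℂ).re
      = 4 * (‖x‖ * ‖A x‖) := by
    have := congrArg Complex.re key
    simpa using this
  have hp : (inner ℂ (A (x+y)) (x+y) : ℂ).re ≤ c * ‖x + y‖ ^ 2 := by
    calc (inner ℂ (A (x+y)) (x+y) : ℂ).re ≤ ‖(inner ℂ (A (x+y)) (x+y) : ℂ)‖ := Complex.re_le_norm _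
      _ ≤ c * ‖x + y‖ ^ 2 := hq _
  have hm : -(inner ℂ (A (x-y)) (x-y) : ℂ).re ≤ c * ‖x - y‖ ^ 2 := by
    calc -(inner ℂ (A (x-y)) (x-y) : ℂ).re ≤ |(inner ℂ (A (x-y)) (x-y) : ℂ).re| := neg_le_abs _
      _ ≤ ‖(inner ℂ (A (x-y)) (x-y) : ℂ)‖ := Complex.abs_re_le_norm _
      _ ≤ c * ‖x - y‖ ^ 2 := hq _
  have par := parallelogram_law_with_norm ℂ x y
  have hpar2 : ‖x + y‖ ^ 2 + ‖x - y‖ ^ 2 = 4 * ‖x‖ ^ 2 := by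
    have h := par
    rw [hyn] at h
    nlinarith [h]
  have h4 : 4 * (‖x‖ * ‖A x‖) ≤ 4 * (c * ‖x‖ ^ 2) := by
    have h5 : 4 * (‖x‖ * ‖A x‖) ≤ c * ‖x + y‖ ^ 2 + c * ‖x - y‖ ^ 2 := by
      rw [← keyre]; linarith
    have h6 : c * ‖x + y‖ ^ 2 + c * ‖x - y‖ ^ 2 = 4 * (c * ‖x‖ ^ 2) := by
      calc c * ‖x + y‖ ^ 2 + c * ‖x - y‖ ^ 2 = c * (‖x + y‖ ^ 2 + ‖x - y‖ ^ 2) := by ring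
        _ = c * (4 * ‖x‖ ^ 2) := by rw [hpar2]
        _ = 4 * (c * ‖x‖ ^ 2) := by ring
    linarith
  have h5 : ‖x‖ * ‖A x‖ ≤ ‖x‖ * (c * ‖x‖) := by nlinarith [h4]
  exact (mul_le_mul_iff_right₀ hxp).mp h5

lemma aux_quadA (S : H →L[ℂ] H) (x : H) :
    (inner ℂ ((((2:ℂ)⁻¹ • (S + adjoint S)) : H →L[ℂ] H) x) x : ℂ)
      = (((inner ℂ (S x) x : ℂ).re : ℝ) : ℂ) := by
  have hadj : (inner ℂ ((adjoint S) x) x : ℂ) = (starRingEnd ℂ) (inner ℂ (S x) x : ℂ) := by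
    rw [inner_conj_symm, ← adjoint_inner_left]
  simp only [coe_smul', Pi.smul_apply, add_apply, inner_smul_left, inner_add_left, hadj]
  rw [Complex.add_conj]
  simp only [map_inv₀, Complex.conj_ofNat]
  push_cast
  ring

lemma aux_quadB (S : H →L[ℂ] H) (x : H) :
    (inner ℂ ((((2 * Complex.I)⁻¹ • (S - adjoint S)) : H →L[ℂ] H) x) x : ℂ)
      = -(((inner ℂ (S x) x : ℂ).im : ℝ) : ℂ) := by
  have hadj : (inner ℂ ((adjoint S) x) x : ℂ) = (starRingEnd ℂ) (inner ℂ (S x) x : ℂ) := by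
    rw [inner_conj_symm, ← adjoint_inner_left]
  simp only [coe_smul', Pi.smul_apply, sub_apply, inner_smul_left, inner_sub_left, hadj]
  rw [Complex.sub_conj]
  simp only [map_inv₀, map_mul, Complex.conj_I, Complex.conj_ofNat]
  have h2 : ((2:ℂ) * -Complex.I)⁻¹ = Complex.I / 2 := by
    refine inv_eq_of_mul_eq_one_right ?_
    linear_combination (-1 : ℂ) * Complex.I_sq
  rw [h2]
  push_cast
  linear_combination ((inner ℂ (S x) x : ℂ).im : ℂ) * Complex.I_sq

lemma aux_adjA (S : H →L[ℂ] H) :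
    adjoint ((2:ℂ)⁻¹ • (S + adjoint S)) = (2:ℂ)⁻¹ • (S + adjoint S) := by
  rw [← star_eq_adjoint, star_smul, star_add]
  rw [star_eq_adjoint, star_eq_adjoint, adjoint_adjoint]
  simp [add_comm]

lemma aux_adjB (S : H →L[ℂ] H) :
    adjoint ((2 * Complex.I)⁻¹ • (S - adjoint S)) = (2 * Complex.I)⁻¹ • (S - adjoint S) := by
  rw [← star_eq_adjoint, star_smul, star_sub]
  rw [star_eq_adjoint, star_eq_adjoint, adjoint_adjoint]
  have h1 : star ((2 * Complex.I)⁻¹ : ℂ) = -(2 * Complex.I)⁻¹ := by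
    simp [Complex.ext_iff]
  rw [h1]
  module

end Aux

/-- `ω(T) = ‖T‖/2` iff `‖ℑ(e^{iθ}T)‖ = ‖ℜ(e^{iθ}T)‖ = ‖T‖/2` for every `θ ∈ ℝ`. -/
theorem stmt_10 {H : Type*} [NormedAddCommGroup H] [InnerProductSpace ℂ H] [CompleteSpace H]
    (T : H →L[ℂ] H) :
    numRadius T = ‖T‖ / 2 ↔
      ∀ θ : ℝ,
        ‖(2 * Complex.I)⁻¹ •
            (Complex.exp (θ * Complex.I) • T - adjoint (Complex.exp (θ * Complex.I) • T))‖ =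
          ‖T‖ / 2 ∧
        ‖(2 : ℂ)⁻¹ •
            (Complex.exp (θ * Complex.I) • T + adjoint (Complex.exp (θ * Complex.I) • T))‖ =
          ‖T‖ / 2 := by
  constructor
  · -- forward direction
    intro hw θ
    set e : ℂ := Complex.exp ((θ : ℂ) * Complex.I) with he_def
    set S : H →L[ℂ] H := e • T with hS_def
    have he : ‖e‖ = 1 := by
      rw [he_def, Complex.norm_exp_ofReal_mul_I]
    have hST : ‖S‖ = ‖T‖ := by rw [hS_def, norm_smul, he, one_mul]
    have hTnn : (0:ℝ) ≤ ‖T‖ / 2 := by positivity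
    have hSinner : ∀ x : H, ‖(inner ℂ (S x) x : ℂ)‖ = ‖(inner ℂ (T x) x : ℂ)‖ := by
      intro x
      have : (inner ℂ (S x) x : ℂ) = (starRingEnd ℂ) e * (inner ℂ (T x) x : ℂ) := by
        rw [hS_def]
        simp [inner_smul_left]; ring
      rw [this, norm_mul, RCLike.norm_conj, he, one_mul]
    have hbA : ∀ x : H, ‖x‖ = 1 →
        ‖(inner ℂ ((((2:ℂ)⁻¹ • (S + adjoint S)) : H →L[ℂ] H) x) x : ℂ)‖ ≤ ‖T‖ / 2 := by
      intro x hx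
      rw [aux_quadA, Complex.norm_real, Real.norm_eq_abs]
      calc |(inner ℂ (S x) x : ℂ).re| ≤ ‖(inner ℂ (S x) x : ℂ)‖ := Complex.abs_re_le_norm _
        _ = ‖(inner ℂ (T x) x : ℂ)‖ := hSinner x
        _ ≤ numRadius T := aux_inner_le T hx
        _ = ‖T‖ / 2 := hw
    have hbB : ∀ x : H, ‖x‖ = 1 →
        ‖(inner ℂ ((((2 * Complex.I)⁻¹ • (S - adjoint S)) : H →L[ℂ] H) x) x : ℂ)‖ ≤ ‖T‖ / 2 := by
      intro x hx
      rw [aux_quadB, norm_neg, Complex.norm_real, Real.norm_eq_abs]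
      calc |(inner ℂ (S x) x : ℂ).im| ≤ ‖(inner ℂ (S x) x : ℂ)‖ := Complex.abs_im_le_norm _
        _ = ‖(inner ℂ (T x) x : ℂ)‖ := hSinner x
        _ ≤ numRadius T := aux_inner_le T hx
        _ = ‖T‖ / 2 := hw
    have hAn : ‖(2:ℂ)⁻¹ • (S + adjoint S)‖ ≤ ‖T‖ / 2 :=
      aux_selfadj_norm_le (aux_adjA S) hTnn hbA
    have hBn : ‖(2 * Complex.I)⁻¹ • (S - adjoint S)‖ ≤ ‖T‖ / 2 :=
      aux_selfadj_norm_le (aux_adjB S) hTnn hbB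
    have hdec : S = (2:ℂ)⁻¹ • (S + adjoint S)
        + Complex.I • ((2 * Complex.I)⁻¹ • (S - adjoint S)) := by
      rw [smul_smul]
      have hI : Complex.I * (2 * Complex.I)⁻¹ = (2:ℂ)⁻¹ := by
        rw [mul_inv, ← mul_assoc, mul_comm Complex.I (2:ℂ)⁻¹, mul_assoc,
          mul_inv_cancel₀ Complex.I_ne_zero, mul_one]
      rw [hI]
      module
    have hT2 : ‖T‖ ≤ ‖(2:ℂ)⁻¹ • (S + adjoint S)‖ + ‖(2 * Complex.I)⁻¹ • (S - adjoint S)‖ := by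
      calc ‖T‖ = ‖S‖ := hST.symm
        _ = ‖(2:ℂ)⁻¹ • (S + adjoint S)
            + Complex.I • ((2 * Complex.I)⁻¹ • (S - adjoint S))‖ := by rw [← hdec]
        _ ≤ ‖(2:ℂ)⁻¹ • (S + adjoint S)‖
            + ‖Complex.I • ((2 * Complex.I)⁻¹ • (S - adjoint S))‖ := norm_add_le _ _
        _ = ‖(2:ℂ)⁻¹ • (S + adjoint S)‖ + ‖(2 * Complex.I)⁻¹ • (S - adjoint S)‖ := by
            congr 1
            rw [norm_smul, Complex.norm_I, one_mul]
    constructor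
    · linarith
    · linarith
  · -- backward direction
    intro h
    have hge : ‖T‖ / 2 ≤ numRadius T := by
      have hA0 := (h 0).2
      have h0 : Complex.exp (((0:ℝ) : ℂ) * Complex.I) = 1 := by simp
      rw [h0, one_smul] at hA0
      have hb : ∀ x : H, ‖x‖ = 1 →
          ‖(inner ℂ ((((2:ℂ)⁻¹ • (T + adjoint T)) : H →L[ℂ] H) x) x : ℂ)‖ ≤ numRadius T := by
        intro x hx
        rw [aux_quadA, Complex.norm_real, Real.norm_eq_abs]
        calc |(inner ℂ (T x) x : ℂ).re| ≤ ‖(inner ℂ (T x) x : ℂ)‖ := Complex.abs_re_le_norm _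
          _ ≤ numRadius T := aux_inner_le T hx
      have := aux_selfadj_norm_le (aux_adjA T) (aux_numRadius_nonneg T) hb
      linarith
    have hle : numRadius T ≤ ‖T‖ / 2 := by
      refine aux_numRadius_le T (by positivity) ?_
      intro x hx
      set z : ℂ := (inner ℂ (T x) x : ℂ) with hz_def
      rcases eq_or_ne z 0 with hz | hz
      · rw [hz]
        simp only [norm_zero]
        positivity
      · set θ : ℝ := Complex.arg z with hθ_def
        have hA := (h θ).2
        set A : H →L[ℂ] H := (2:ℂ)⁻¹ •
          (Complex.exp ((θ:ℂ) * Complex.I) • T + adjoint (Complex.exp ((θ:ℂ) * Complex.I) • T))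
          with hA_def
        have hconj : (starRingEnd ℂ) (Complex.exp ((θ:ℂ) * Complex.I))
            = Complex.exp (-(θ:ℂ) * Complex.I) := by
          rw [← Complex.exp_conj]
          congr 1
          simp [Complex.ext_iff]
        have hwz : (inner ℂ ((Complex.exp ((θ:ℂ) * Complex.I) • T) x) x : ℂ) = (‖z‖ : ℂ) := by
          have h1 : (inner ℂ ((Complex.exp ((θ:ℂ) * Complex.I) • T) x) x : ℂ)
              = (starRingEnd ℂ) (Complex.exp ((θ:ℂ) * Complex.I)) * z := by
            rw [hz_def]
            simp [inner_smul_left]; ring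
          rw [h1, hconj]
          have habs := Complex.norm_mul_exp_arg_mul_I z
          calc Complex.exp (-(θ:ℂ) * Complex.I) * z
              = Complex.exp (-(θ:ℂ) * Complex.I)
                * ((‖z‖ : ℂ) * Complex.exp ((θ:ℂ) * Complex.I)) := by
                rw [hθ_def]; rw [habs]
            _ = (‖z‖ : ℂ)
                * (Complex.exp (-(θ:ℂ) * Complex.I) * Complex.exp ((θ:ℂ) * Complex.I)) := by ring
            _ = (‖z‖ : ℂ) * Complex.exp (-(θ:ℂ) * Complex.I + (θ:ℂ) * Complex.I) := by
                rw [Complex.exp_add]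
            _ = (‖z‖ : ℂ) := by
                simp
        have hq := aux_quadA (Complex.exp ((θ:ℂ) * Complex.I) • T) x
        rw [hwz] at hq
        simp only [Complex.ofReal_re] at hq
        calc ‖z‖ = ‖(‖z‖ : ℂ)‖ := by simp
          _ = ‖(inner ℂ (A x) x : ℂ)‖ := by rw [hA_def, hq]
          _ ≤ ‖A x‖ * ‖x‖ := norm_inner_le_norm _ _
          _ ≤ ‖A‖ * ‖x‖ * ‖x‖ := by gcongr; exact A.le_opNorm _
          _ = ‖A‖ := by rw [hx]; ring
          _ = ‖T‖ / 2 := hA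
    linarith
end
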